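/- Let I be a nonempty index set, i(b,·) : I → ℝ_{>0} and i(z,·) : I → ℝ_{≥0} with D := sup_{c∈I} i(z,c)/i(b,c) finite. For t ≥ 0 set g_t(c) := i(b,c) + t·i(z,c). Then for all 0 ≤ s ≤ t: (sup_c g_s(c)/i(b,c)) · (sup_c g_t(c)/g_s(c)) = sup_c g_t(c)/i(b,c). Equivalently, (1 + sD)·sup_c (1 + t·f(c))/(1 + s·f(c)) = 1 + tD, where f(c) := i(z,c)/i(b,c). -/

import Mathlib

/-- The key multiplicative dilation identity along the path t ↦ b + t·z:
`Dil(b, γ(s)) · Dil(γ(s), γ(t)) = Dil(b, γ(t))` for `0 ≤ s ≤ t`. -/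
theorem stmt3 {I : Type*} [Nonempty I]
    (ib iz : I → ℝ)
    (hb : ∀ c, 0 < ib c) (hz : ∀ c, 0 ≤ iz c)
    (hbdd : BddAbove (Set.range fun c => iz c / ib c)) :
    ∀ s t : ℝ, 0 ≤ s → s ≤ t →
      (⨆ c, (ib c + s * iz c) / ib c) *
        (⨆ c, (ib c + t * iz c) / (ib c + s * iz c)) =
      ⨆ c, (ib c + t * iz c) / ib c := by
  intro s t hs hst
  have ht : 0 ≤ t := hs.trans hst
  set f : I → ℝ := fun c => iz c / ib c with hf
  have hf0 : ∀ c, 0 ≤ f c := fun c => div_nonneg (hz c) (hb c).le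
  set D := ⨆ c, f c with hD
  have hD0 : 0 ≤ D :=
    le_trans (hf0 (Classical.arbitrary I)) (le_ciSup hbdd (Classical.arbitrary I))
  -- generic lemma: for r ≥ 0, ⨆ c, 1 + r * f c = 1 + r * D
  have key1 : ∀ r : ℝ, 0 ≤ r → (⨆ c, 1 + r * f c) = 1 + r * D := by
    intro r hr
    have hmono : Monotone fun x : ℝ => 1 + r * max x 0 := by
      intro a b hab
      have h := mul_le_mul_of_nonneg_left (max_le_max hab (le_refl (0:ℝ))) hr
      simpa using add_le_add_left h 1
    have hcont : ContinuousAt (fun x : ℝ => 1 + r * max x 0) D := by fun_prop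
    have := hmono.map_ciSup_of_continuousAt hcont hbdd
    simp only [← hD, max_eq_left hD0] at this
    rw [this]
    congr 1
    funext c
    rw [max_eq_left (hf0 c)]
  -- generic: the quotient sup
  have hden : ∀ x : ℝ, (0:ℝ) < 1 + s * max x 0 := by
    intro x
    have : (0:ℝ) ≤ max x 0 := le_max_right _ _
    nlinarith
  have key2 : (⨆ c, (1 + t * f c) / (1 + s * f c)) = (1 + t * D) / (1 + s * D) := by
    have hmono : Monotone fun x : ℝ => (1 + t * max x 0) / (1 + s * max x 0) := by
      intro a b hab
      have ha : (0:ℝ) ≤ max a 0 := le_max_right _ _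
      have hab' : max a 0 ≤ max b 0 := max_le_max hab le_rfl
      rw [div_le_div_iff₀ (hden a) (hden b)]
      nlinarith
    have hcont : ContinuousAt (fun x : ℝ => (1 + t * max x 0) / (1 + s * max x 0)) D := by
      apply ContinuousAt.div
      · fun_prop
      · fun_prop
      · exact (hden D).ne'
    have := hmono.map_ciSup_of_continuousAt hcont hbdd
    simp only [← hD, max_eq_left hD0] at this
    rw [this]
    congr 1
    funext c
    rw [max_eq_left (hf0 c)]
  have e1 : (⨆ c, (ib c + s * iz c) / ib c) = 1 + s * D := by
    rw [← key1 s hs]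
    congr 1
    funext c
    simp only [hf]
    rw [add_div, div_self (hb c).ne', mul_div_assoc]
  have e3 : (⨆ c, (ib c + t * iz c) / ib c) = 1 + t * D := by
    rw [← key1 t ht]
    congr 1
    funext c
    simp only [hf]
    rw [add_div, div_self (hb c).ne', mul_div_assoc]
  have e2 : (⨆ c, (ib c + t * iz c) / (ib c + s * iz c)) = (1 + t * D) / (1 + s * D) := by
    rw [← key2]
    congr 1
    funext c
    have hpos : 0 < ib c + s * iz c := by nlinarith [hb c, hz c]
    have h1 : 1 + t * f c = (ib c + t * iz c) / ib c := by
      simp only [hf]; rw [add_div, div_self (hb c).ne', mul_div_assoc]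
    have h2 : 1 + s * f c = (ib c + s * iz c) / ib c := by
      simp only [hf]; rw [add_div, div_self (hb c).ne', mul_div_assoc]
    rw [h1, h2]
    rw [div_div_div_cancel_right₀]
    exact (hb c).ne'
  rw [e1, e2, e3]
  field_simp
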